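/- Let Γ be a submonoid of the nonnegative rationals ℚ≥0 (under addition), R a nonzero commutative ring, and α ∈ Γ with α ≠ 0. Then X^α − 1 is not a unit in the monoid ring R[X;Γ]. -/

import Mathlib

open scoped NNRat

/-- For a submonoid `Γ` of `ℚ≥0`, a nonzero commutative ring `R`
and `0 ≠ α ∈ Γ`, the element `X^α - 1` is not a unit in `R[X;Γ]`. -/
theorem stmt2 (Γ : AddSubmonoid ℚ≥0) (R : Type*) [CommRing R] [Nontrivial R]
    (α : Γ) (hα : α ≠ 0) :
    ¬ IsUnit (AddMonoidAlgebra.of' R Γ α - 1) := by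
  intro h
  have h2 := h.map (AddMonoidAlgebra.lift R R Γ (1 : Multiplicative Γ →* R))
  simp [AddMonoidAlgebra.lift_of', isUnit_zero_iff] at h2
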